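/- For every ρ > 0, √(2π(1 − e^{−ρ²/2})) ≤ ∫_{−ρ}^{ρ} e^{−x²/2} dx ≤ √(2π(1 − e^{−ρ²})). -/

import Mathlib

open Real MeasureTheory Set intervalIntegral

noncomputable def gaussU (t : ℝ) : ℝ := ∫ x in (0:ℝ)..t, Real.exp (-x ^ 2)

noncomputable def gaussG (t : ℝ) : ℝ :=
  ∫ s in (0:ℝ)..1, Real.exp (-t ^ 2 * (1 + s ^ 2)) / (1 + s ^ 2)

lemma contGauss : Continuous fun x : ℝ => Real.exp (-x ^ 2) := by continuity

lemma hasDerivU (t : ℝ) : HasDerivAt gaussU (Real.exp (-t ^ 2)) t :=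
  intervalIntegral.integral_hasDerivAt_right (contGauss.intervalIntegrable _ _)
    (contGauss.stronglyMeasurableAtFilter _ _) contGauss.continuousAt

lemma contG (t : ℝ) : Continuous fun s : ℝ => Real.exp (-t ^ 2 * (1 + s ^ 2)) / (1 + s ^ 2) := by
  apply Continuous.div (by continuity) (by continuity)
  intro s; positivity

lemma derivInt (t : ℝ) :
    (∫ s in (0:ℝ)..1, -2 * t * Real.exp (-t ^ 2 * (1 + s ^ 2)))
      = -2 * Real.exp (-t ^ 2) * gaussU t := by
  by_cases ht : t = 0
  · simp [ht, gaussU]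
  · have key : ∀ s : ℝ, -2 * t * Real.exp (-t ^ 2 * (1 + s ^ 2))
        = (-2 * t * Real.exp (-t ^ 2)) * Real.exp (-(s * t) ^ 2) := by
      intro s
      have : Real.exp (-t ^ 2 * (1 + s ^ 2)) = Real.exp (-t ^ 2) * Real.exp (-(s * t) ^ 2) := by
        rw [← Real.exp_add]; congr 1; ring
      rw [this]; ring
    rw [intervalIntegral.integral_congr (fun s _ => key s),
      intervalIntegral.integral_const_mul,
      intervalIntegral.integral_comp_mul_right (fun x => Real.exp (-x ^ 2)) ht]
    simp only [zero_mul, one_mul, smul_eq_mul]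
    rw [show (∫ x in (0:ℝ)..t, Real.exp (-x ^ 2)) = gaussU t from rfl]
    field_simp

lemma hasDerivG (t : ℝ) : HasDerivAt gaussG (-2 * Real.exp (-t ^ 2) * gaussU t) t := by
  have hs2 : ∀ s : ℝ, (1:ℝ) + s ^ 2 ≠ 0 := fun s => by positivity
  have h := intervalIntegral.hasDerivAt_integral_of_dominated_loc_of_deriv_le
    (F := fun x s => Real.exp (-x ^ 2 * (1 + s ^ 2)) / (1 + s ^ 2))
    (F' := fun x s => -2 * x * Real.exp (-x ^ 2 * (1 + s ^ 2)))
    (x₀ := t) (a := (0:ℝ)) (b := 1) (μ := volume)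
    (bound := fun _ => 2 * (|t| + 1)) (Metric.ball_mem_nhds t one_pos)
    (Filter.Eventually.of_forall fun x => (contG x).aestronglyMeasurable)
    ((contG t).intervalIntegrable _ _)
    (by
      apply Continuous.aestronglyMeasurable
      continuity)
    (ae_of_all _ ?_) (intervalIntegrable_const) (ae_of_all _ ?_)
  · have := h.2
    rwa [derivInt t] at this
  · intro s _ x hx
    show ‖-2 * x * Real.exp (-x ^ 2 * (1 + s ^ 2))‖ ≤ 2 * (|t| + 1)
    have hexp : Real.exp (-x ^ 2 * (1 + s ^ 2)) ≤ 1 := by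
      rw [Real.exp_le_one_iff]
      nlinarith [sq_nonneg x, sq_nonneg s]
    have hxt : |x| ≤ |t| + 1 := by
      have h1 : |x - t| < 1 := by
        simpa [Real.dist_eq] using Metric.mem_ball.mp hx
      have h2 := abs_sub_abs_le_abs_sub x t
      linarith
    have hnn := Real.exp_nonneg (-x ^ 2 * (1 + s ^ 2))
    rw [Real.norm_eq_abs, abs_mul, abs_mul, Real.abs_exp]
    have : |(-2:ℝ)| = 2 := by norm_num
    rw [this]
    nlinarith [abs_nonneg x, abs_nonneg t, mul_nonneg (abs_nonneg x) (sub_nonneg.mpr hexp)]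
  · intro s _ x _
    have h0 : HasDerivAt (fun x : ℝ => -x ^ 2 * (1 + s ^ 2)) (-(2 * x ^ 1) * (1 + s ^ 2)) x :=
      ((hasDerivAt_pow 2 x).neg).mul_const _
    have h1 := (h0.exp).div_const (1 + s ^ 2)
    refine h1.congr_deriv ?_
    field_simp

lemma gaussU_sq_add_G (t : ℝ) : gaussU t ^ 2 + gaussG t = π / 4 := by
  have hderiv : ∀ x : ℝ, HasDerivAt (fun y => gaussU y ^ 2 + gaussG y) 0 x := by
    intro x
    have h1 : HasDerivAt (fun y => gaussU y ^ 2)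
        (2 * gaussU x ^ 1 * Real.exp (-x ^ 2)) x := by
      simpa using (hasDerivU x).fun_pow 2
    have h2 := h1.fun_add (hasDerivG x)
    refine h2.congr_deriv ?_
    ring
  have hconst : (fun y => gaussU y ^ 2 + gaussG y) t
      = (fun y => gaussU y ^ 2 + gaussG y) 0 :=
    is_const_of_deriv_eq_zero (fun x => (hderiv x).differentiableAt)
      (fun x => (hderiv x).deriv) t 0
  have h0 : gaussU 0 ^ 2 + gaussG 0 = π / 4 := by
    have : gaussG 0 = ∫ s in (0:ℝ)..1, 1 / (1 + s ^ 2) := by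
      unfold gaussG
      apply intervalIntegral.integral_congr
      intro s _
      norm_num
    rw [this, integral_one_div_one_add_sq] at *
    simp [gaussU, Real.arctan_one]
  simpa [h0] using hconst

lemma int_const_div (c : ℝ) :
    (∫ s in (0:ℝ)..1, Real.exp c / (1 + s ^ 2)) = Real.exp c * (π / 4) := by
  have : ∀ s : ℝ, Real.exp c / (1 + s ^ 2) = Real.exp c * (1 / (1 + s ^ 2)) := by
    intro s; ring
  rw [intervalIntegral.integral_congr (fun s _ => this s),
    intervalIntegral.integral_const_mul, integral_one_div_one_add_sq]
  simp [Real.arctan_one]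

lemma gaussG_le (t : ℝ) : gaussG t ≤ Real.exp (-t ^ 2) * (π / 4) := by
  rw [← int_const_div]
  apply intervalIntegral.integral_mono_on zero_le_one
    ((contG t).intervalIntegrable _ _)
    ((Continuous.div continuous_const (by continuity)
      (fun s => by positivity)).intervalIntegrable _ _)
  intro s _
  apply div_le_div_of_nonneg_right ?h ?hc
  case hc => positivity
  case h =>
    apply Real.exp_le_exp.mpr
    nlinarith [sq_nonneg t, sq_nonneg s]

lemma le_gaussG (t : ℝ) : Real.exp (-(2 * t ^ 2)) * (π / 4) ≤ gaussG t := by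
  rw [← int_const_div]
  apply intervalIntegral.integral_mono_on zero_le_one
    ((Continuous.div continuous_const (by continuity)
      (fun s => by positivity)).intervalIntegrable _ _)
    ((contG t).intervalIntegrable _ _)
  intro s hs
  apply div_le_div_of_nonneg_right ?h ?hc
  case hc => positivity
  case h =>
    apply Real.exp_le_exp.mpr
    have : s ^ 2 ≤ 1 := by
      rcases hs with ⟨h1, h2⟩
      nlinarith
    nlinarith [sq_nonneg t]

/-- Gaussian integral bounds: for `ρ > 0`,
`√(2π(1 - e^{-ρ²/2})) ≤ ∫_{-ρ}^{ρ} e^{-x²/2} dx ≤ √(2π(1 - e^{-ρ²}))`. -/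
theorem gaussian_integral_bounds (ρ : ℝ) (hρ : 0 < ρ) :
    Real.sqrt (2 * π * (1 - Real.exp (-ρ ^ 2 / 2))) ≤
      (∫ x in (-ρ)..ρ, Real.exp (-x ^ 2 / 2)) ∧
    (∫ x in (-ρ)..ρ, Real.exp (-x ^ 2 / 2)) ≤
      Real.sqrt (2 * π * (1 - Real.exp (-ρ ^ 2))) := by
  set t : ℝ := ρ / Real.sqrt 2 with ht
  have hsqrt2 : Real.sqrt 2 ≠ 0 := by positivity
  have ht2 : t ^ 2 = ρ ^ 2 / 2 := by
    rw [ht, div_pow, Real.sq_sqrt (by norm_num : (0:ℝ) ≤ 2)]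
  -- rewrite the integral
  have hint : (∫ x in (-ρ)..ρ, Real.exp (-x ^ 2 / 2)) = 2 * Real.sqrt 2 * gaussU t := by
    have h1 : ∀ x : ℝ, Real.exp (-x ^ 2 / 2)
        = (fun u => Real.exp (-u ^ 2)) (x / Real.sqrt 2) := by
      intro x
      simp only
      congr 1
      rw [div_pow, Real.sq_sqrt (by norm_num : (0:ℝ) ≤ 2)]
      ring
    rw [intervalIntegral.integral_congr (fun x _ => h1 x),
      intervalIntegral.integral_comp_div (fun u => Real.exp (-u ^ 2)) hsqrt2]
    have hneg : -ρ / Real.sqrt 2 = -t := by rw [ht]; ring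
    rw [hneg, smul_eq_mul]
    have hsplit : (∫ u in (-t)..t, Real.exp (-u ^ 2))
        = (∫ u in (-t)..(0:ℝ), Real.exp (-u ^ 2)) + ∫ u in (0:ℝ)..t, Real.exp (-u ^ 2) :=
      (intervalIntegral.integral_add_adjacent_intervals
        (contGauss.intervalIntegrable _ _) (contGauss.intervalIntegrable _ _)).symm
    have heven : (∫ u in (-t)..(0:ℝ), Real.exp (-u ^ 2)) = gaussU t := by
      have := intervalIntegral.integral_comp_neg (a := (0:ℝ)) (b := t)
        (fun u => Real.exp (-u ^ 2))
      simp only [neg_zero] at this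
      rw [← this]
      apply intervalIntegral.integral_congr
      intro u _
      norm_num
    rw [hsplit, heven]
    unfold gaussU
    ring
  have hU : 0 ≤ gaussU t := by
    apply intervalIntegral.integral_nonneg (by positivity)
    intro u _
    positivity
  have hI : 0 ≤ (∫ x in (-ρ)..ρ, Real.exp (-x ^ 2 / 2)) := by
    rw [hint]; positivity
  have hsq : (∫ x in (-ρ)..ρ, Real.exp (-x ^ 2 / 2)) ^ 2 = 8 * (π / 4 - gaussG t) := by
    rw [hint]
    have h8 : (2 * Real.sqrt 2) ^ 2 = 8 := by
      rw [mul_pow, Real.sq_sqrt (by norm_num : (0:ℝ) ≤ 2)]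
      norm_num
    have := gaussU_sq_add_G t
    nlinarith [this]
  have hlow : 2 * π * (1 - Real.exp (-ρ ^ 2 / 2))
      ≤ (∫ x in (-ρ)..ρ, Real.exp (-x ^ 2 / 2)) ^ 2 := by
    rw [hsq]
    have := gaussG_le t
    rw [ht2, show -(ρ ^ 2 / 2) = -ρ ^ 2 / 2 by ring] at this
    nlinarith
  have hhigh : (∫ x in (-ρ)..ρ, Real.exp (-x ^ 2 / 2)) ^ 2
      ≤ 2 * π * (1 - Real.exp (-ρ ^ 2)) := by
    rw [hsq]
    have := le_gaussG t
    have h2t : 2 * t ^ 2 = ρ ^ 2 := by rw [ht2]; ring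
    rw [h2t] at this
    nlinarith
  constructor
  · calc Real.sqrt (2 * π * (1 - Real.exp (-ρ ^ 2 / 2)))
        ≤ Real.sqrt ((∫ x in (-ρ)..ρ, Real.exp (-x ^ 2 / 2)) ^ 2) :=
          Real.sqrt_le_sqrt hlow
      _ = _ := Real.sqrt_sq hI
  · calc (∫ x in (-ρ)..ρ, Real.exp (-x ^ 2 / 2))
        = Real.sqrt ((∫ x in (-ρ)..ρ, Real.exp (-x ^ 2 / 2)) ^ 2) := (Real.sqrt_sq hI).symm
      _ ≤ _ := Real.sqrt_le_sqrt hhigh
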